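/- Let R be a commutative ring and M, M′ two R-modules. For an R-algebra A set T(A) = (M ⊗_R A) ⊕ (M′ ⊗_R A). Define I : T(R[X]) → T(R[t,t⁻¹]) componentwise by the maps induced by X ↦ t, and J : T(R[Y]) → T(R[t,t⁻¹]) by J(b₀, b₁) = (β(b₀), −t⁻²·β′(b₁)), where β and β′ are induced by Y ↦ t⁻¹ and t⁻²· is multiplication by t⁻². Then: (a) the sequence 0 → M → T(R[X]) ⊕ T(R[Y]) → T(R[t,t⁻¹]) is exact, where the first map sends m to ((m ⊗ 1, 0), (m ⊗ 1, 0)) and the second sends (u, v) to I(u) − J(v); and (b) the map M′ → coker(I − J) sending m′ to the class of (0, m′ ⊗ t⁻¹) is an isomorphism of R-modules. -/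

import Mathlib

open TensorProduct Polynomial LaurentPolynomial

noncomputable section

variable (R : Type*) [CommRing R]
variable (M : Type*) [AddCommGroup M] [Module R M]
variable (M' : Type*) [AddCommGroup M'] [Module R M']

/-- The map `M ⊗[R] R[X] → M ⊗[R] R[t,t⁻¹]` induced by the `R`-algebra map `X ↦ t`. -/
noncomputable def indT (N : Type*) [AddCommGroup N] [Module R N] :
    N ⊗[R] R[X] →ₗ[R] N ⊗[R] R[T;T⁻¹] :=
  LinearMap.lTensor N (Polynomial.toLaurentAlg : R[X] →ₐ[R] R[T;T⁻¹]).toLinearMap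

/-- The map `N ⊗[R] R[Y] → N ⊗[R] R[t,t⁻¹]` induced by the `R`-algebra map `Y ↦ t⁻¹`. -/
noncomputable def indTinv (N : Type*) [AddCommGroup N] [Module R N] :
    N ⊗[R] R[X] →ₗ[R] N ⊗[R] R[T;T⁻¹] :=
  LinearMap.lTensor N (Polynomial.aeval (T (-1) : R[T;T⁻¹]) : R[X] →ₐ[R] R[T;T⁻¹]).toLinearMap

/-- Multiplication by `t⁻²` on `N ⊗[R] R[t,t⁻¹]`. -/
noncomputable def mulTinvSq (N : Type*) [AddCommGroup N] [Module R N] :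
    N ⊗[R] R[T;T⁻¹] →ₗ[R] N ⊗[R] R[T;T⁻¹] :=
  LinearMap.lTensor N (LinearMap.mulLeft R (T (-2) : R[T;T⁻¹]))

/-- `I : T(R[X]) → T(R[t,t⁻¹])`, induced componentwise by `X ↦ t`. -/
noncomputable def Imap :
    (M ⊗[R] R[X]) × (M' ⊗[R] R[X]) →ₗ[R] (M ⊗[R] R[T;T⁻¹]) × (M' ⊗[R] R[T;T⁻¹]) :=
  LinearMap.prodMap (indT R M) (indT R M')

/-- `J(b₀, b₁) = (β(b₀), −t⁻²·β′(b₁))`, where `β, β′` are induced by `Y ↦ t⁻¹`. -/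
noncomputable def Jmap :
    (M ⊗[R] R[X]) × (M' ⊗[R] R[X]) →ₗ[R] (M ⊗[R] R[T;T⁻¹]) × (M' ⊗[R] R[T;T⁻¹]) :=
  LinearMap.prodMap (indTinv R M) (-(mulTinvSq R M' ∘ₗ indTinv R M'))

/-- The map `m ↦ ((m ⊗ 1, 0), (m ⊗ 1, 0))`. -/
noncomputable def firstMap :
    M →ₗ[R] ((M ⊗[R] R[X]) × (M' ⊗[R] R[X])) × ((M ⊗[R] R[X]) × (M' ⊗[R] R[X])) :=
  LinearMap.prod (LinearMap.prod ((TensorProduct.mk R M R[X]).flip 1) 0)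
    (LinearMap.prod ((TensorProduct.mk R M R[X]).flip 1) 0)

/-- The map `(u, v) ↦ I(u) − J(v)`. -/
noncomputable def IminusJ :
    ((M ⊗[R] R[X]) × (M' ⊗[R] R[X])) × ((M ⊗[R] R[X]) × (M' ⊗[R] R[X])) →ₗ[R]
      (M ⊗[R] R[T;T⁻¹]) × (M' ⊗[R] R[T;T⁻¹]) :=
  Imap R M M' ∘ₗ LinearMap.fst R _ _ - Jmap R M M' ∘ₗ LinearMap.snd R _ _

/-- The map `M′ → coker(I − J)`, `m′ ↦ [(0, m′ ⊗ t⁻¹)]`. -/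
noncomputable def toCokerIminusJ :
    M' →ₗ[R] ((M ⊗[R] R[T;T⁻¹]) × (M' ⊗[R] R[T;T⁻¹])) ⧸
      LinearMap.range (IminusJ R M M') :=
  (LinearMap.range (IminusJ R M M')).mkQ ∘ₗ
    LinearMap.prod 0 ((TensorProduct.mk R M' R[T;T⁻¹]).flip (T (-1)))

namespace BassAux

variable {N : Type*} [AddCommGroup N]

lemma emb_inj : Function.Injective (fun n : ℕ => (n : ℤ)) := fun a b h => by
  simpa using h

lemma neg_inj : Function.Injective (fun n : ℕ => -(n : ℤ)) := fun a b h => by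
  simp only [] at h; omega

lemma negsh_inj : Function.Injective (fun n : ℕ => -(n : ℤ) - 2) := fun a b h => by
  simp only [] at h; omega

lemma mapDomain_emb_apply (f : ℕ →₀ N) (n : ℕ) :
    Finsupp.mapDomain (fun m : ℕ => (m : ℤ)) f (n : ℤ) = f n := by
  simpa using Finsupp.mapDomain_apply emb_inj f n

lemma mapDomain_neg_apply (f : ℕ →₀ N) (n : ℕ) :
    Finsupp.mapDomain (fun m : ℕ => -(m : ℤ)) f (-(n : ℤ)) = f n := by
  simpa using Finsupp.mapDomain_apply neg_inj f n

lemma mapDomain_negsh_apply (f : ℕ →₀ N) (n : ℕ) :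
    Finsupp.mapDomain (fun m : ℕ => -(m : ℤ) - 2) f (-(n : ℤ) - 2) = f n := by
  simpa using Finsupp.mapDomain_apply negsh_inj f n

lemma mapDomain_emb_neg (f : ℕ →₀ N) {k : ℤ} (hk : k < 0) :
    Finsupp.mapDomain (fun m : ℕ => (m : ℤ)) f k = 0 := by
  refine Finsupp.mapDomain_notin_range _ _ ?_
  rintro ⟨n, rfl⟩
  simp only [] at hk; omega

lemma mapDomain_neg_pos (f : ℕ →₀ N) {k : ℤ} (hk : 0 < k) :
    Finsupp.mapDomain (fun m : ℕ => -(m : ℤ)) f k = 0 := by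
  refine Finsupp.mapDomain_notin_range _ _ ?_
  rintro ⟨n, rfl⟩
  simp only [] at hk; omega

lemma mapDomain_negsh_ge (f : ℕ →₀ N) {k : ℤ} (hk : -1 ≤ k) :
    Finsupp.mapDomain (fun m : ℕ => -(m : ℤ) - 2) f k = 0 := by
  refine Finsupp.mapDomain_notin_range _ _ ?_
  rintro ⟨n, rfl⟩
  simp only [] at hk; omega

/-- Kernel computation for the `M`-component. -/
lemma kerM {f g : ℕ →₀ N}
    (h : Finsupp.mapDomain (fun m : ℕ => (m : ℤ)) f
        = Finsupp.mapDomain (fun m : ℕ => -(m : ℤ)) g) :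
    f = Finsupp.single 0 (f 0) ∧ g = Finsupp.single 0 (f 0) := by
  have h00 : f 0 = g 0 := by
    have := DFunLike.congr_fun h (0 : ℤ)
    rw [show (0:ℤ) = ((0:ℕ):ℤ) by norm_num, mapDomain_emb_apply] at this
    rw [show ((0:ℕ):ℤ) = -((0:ℕ):ℤ) by norm_num, mapDomain_neg_apply] at this
    exact this
  constructor
  · ext n
    rcases Nat.eq_zero_or_pos n with rfl | hn
    · simp
    · rw [Finsupp.single_apply_eq_zero.mpr (fun hh => absurd hh.symm (by omega)), ← mapDomain_emb_apply f n, h,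
        mapDomain_neg_pos _ (by exact_mod_cast hn)]
  · ext n
    rcases Nat.eq_zero_or_pos n with rfl | hn
    · simp [h00]
    · rw [Finsupp.single_apply_eq_zero.mpr (fun hh => absurd hh.symm (by omega)), ← mapDomain_neg_apply g n, ← h,
        mapDomain_emb_neg _ (by omega)]

/-- Kernel computation for the `M'`-component. -/
lemma kerM' {f g : ℕ →₀ N}
    (h : Finsupp.mapDomain (fun m : ℕ => (m : ℤ)) f
        + Finsupp.mapDomain (fun m : ℕ => -(m : ℤ) - 2) g = 0) :
    f = 0 ∧ g = 0 := by
  constructor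
  · ext n
    have := DFunLike.congr_fun h ((n : ℤ))
    rw [Finsupp.add_apply, mapDomain_emb_apply, mapDomain_negsh_ge _ (by omega)] at this
    simpa using this
  · ext n
    have := DFunLike.congr_fun h (-(n : ℤ) - 2)
    rw [Finsupp.add_apply, mapDomain_negsh_apply, mapDomain_emb_neg _ (by omega)] at this
    simpa using this

/-- Surjectivity for the `M`-component. -/
lemma surjM (h : ℤ →₀ N) : ∃ f g : ℕ →₀ N,
    Finsupp.mapDomain (fun m : ℕ => (m : ℤ)) f
      - Finsupp.mapDomain (fun m : ℕ => -(m : ℤ)) g = h := by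
  refine ⟨Finsupp.comapDomain _ h emb_inj.injOn,
    (Finsupp.comapDomain (fun m : ℕ => -(m : ℤ)) (-h) neg_inj.injOn).erase 0, ?_⟩
  ext k
  rw [Finsupp.sub_apply]
  rcases lt_trichotomy k 0 with hk | rfl | hk
  · obtain ⟨n, hn, rfl⟩ : ∃ n : ℕ, n ≠ 0 ∧ k = -(n : ℤ) := ⟨(-k).toNat, by omega, by omega⟩
    rw [mapDomain_emb_neg _ hk, mapDomain_neg_apply,
      Finsupp.erase_ne hn, Finsupp.comapDomain_apply]
    simp
  · rw [show (0:ℤ) = ((0:ℕ):ℤ) by norm_num, mapDomain_emb_apply,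
      show ((0:ℕ):ℤ) = -((0:ℕ):ℤ) by norm_num, mapDomain_neg_apply,
      Finsupp.erase_same, Finsupp.comapDomain_apply]
    simp
  · obtain ⟨n, rfl⟩ : ∃ n : ℕ, k = (n : ℤ) := ⟨k.toNat, by omega⟩
    rw [mapDomain_emb_apply, mapDomain_neg_pos _ hk, Finsupp.comapDomain_apply]
    simp

/-- Surjectivity for the `M'`-component. -/
lemma surjM' (h : ℤ →₀ N) (h1 : h (-1) = 0) : ∃ f g : ℕ →₀ N,
    Finsupp.mapDomain (fun m : ℕ => (m : ℤ)) f
      + Finsupp.mapDomain (fun m : ℕ => -(m : ℤ) - 2) g = h := by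
  refine ⟨Finsupp.comapDomain _ h emb_inj.injOn,
    Finsupp.comapDomain (fun m : ℕ => -(m : ℤ) - 2) h negsh_inj.injOn, ?_⟩
  ext k
  rw [Finsupp.add_apply]
  rcases le_or_gt 0 k with hk | hk
  · obtain ⟨n, rfl⟩ : ∃ n : ℕ, k = (n : ℤ) := ⟨k.toNat, by omega⟩
    rw [mapDomain_emb_apply, mapDomain_negsh_ge _ (by omega), Finsupp.comapDomain_apply]
    simp
  · rcases eq_or_lt_of_le (show k ≤ -1 by omega) with rfl | hk2
    · rw [mapDomain_emb_neg _ hk, mapDomain_negsh_ge _ le_rfl, h1]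
      simp
    · obtain ⟨n, rfl⟩ : ∃ n : ℕ, k = -(n : ℤ) - 2 := ⟨(-k-2).toNat, by omega⟩
      rw [mapDomain_emb_neg _ hk, mapDomain_negsh_apply, Finsupp.comapDomain_apply]
      simp

end BassAux


section BassInfra

variable (N : Type*) [AddCommGroup N] [Module R N]

noncomputable def bassET : N ⊗[R] R[T;T⁻¹] ≃ₗ[R] (ℤ →₀ N) :=
  (LinearEquiv.lTensor N (AddMonoidAlgebra.coeffLinearEquiv R)).trans
    (TensorProduct.finsuppScalarRight R R N ℤ)

noncomputable def bassEX : N ⊗[R] R[X] ≃ₗ[R] (ℕ →₀ N) :=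
  (LinearEquiv.lTensor N ((Polynomial.toFinsuppIsoAlg R).toLinearEquiv.trans
    (AddMonoidAlgebra.coeffLinearEquiv R))).trans
    (TensorProduct.finsuppScalarRight R R N ℕ)

lemma bassET_tmul (n : N) (k : ℤ) :
    bassET R N (n ⊗ₜ (T k : R[T;T⁻¹])) = Finsupp.single k n := by
  rw [bassET, LinearEquiv.trans_apply, LinearEquiv.lTensor_tmul,
    show AddMonoidAlgebra.coeffLinearEquiv R (T k : R[T;T⁻¹]) = Finsupp.single k (1:R) from rfl]
  erw [TensorProduct.finsuppScalarRight_apply_tmul]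
  rw [Finsupp.sum_single_index] <;> simp

lemma bassEX_tmul (n : N) (k : ℕ) :
    bassEX R N (n ⊗ₜ ((X:R[X])^k)) = Finsupp.single k n := by
  rw [bassEX]
  simp only [LinearEquiv.trans_apply, LinearEquiv.lTensor_tmul]
  rw [show (AddMonoidAlgebra.coeffLinearEquiv R ((toFinsuppIsoAlg R).toLinearEquiv ((X:R[X])^k))) = Finsupp.single k (1:R) by
    simp [toFinsuppIsoAlg, AlgEquiv.ofRingEquiv]]
  erw [TensorProduct.finsuppScalarRight_apply_tmul]
  rw [Finsupp.sum_single_index] <;> simp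

lemma bassEX_symm_single (n : N) (k : ℕ) :
    (bassEX R N).symm (Finsupp.single k n) = n ⊗ₜ ((X:R[X])^k) := by
  rw [← bassEX_tmul R N n k, LinearEquiv.symm_apply_apply]

lemma bassET_indT (x : N ⊗[R] R[X]) :
    bassET R N (indT R N x) = Finsupp.mapDomain (fun m : ℕ => (m:ℤ)) (bassEX R N x) := by
  have h : (bassET R N).toLinearMap ∘ₗ indT R N ∘ₗ (bassEX R N).symm.toLinearMap
      = Finsupp.lmapDomain N R (fun m : ℕ => (m:ℤ)) := by
    apply Finsupp.lhom_ext
    intro k n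
    simp [bassEX_symm_single, indT, bassET_tmul, Polynomial.toLaurent_X_pow,
      Polynomial.toLaurentAlg_apply]
  have := LinearMap.congr_fun h (bassEX R N x)
  simpa using this

lemma bassET_indTinv (x : N ⊗[R] R[X]) :
    bassET R N (indTinv R N x) = Finsupp.mapDomain (fun m : ℕ => -(m:ℤ)) (bassEX R N x) := by
  have h : (bassET R N).toLinearMap ∘ₗ indTinv R N ∘ₗ (bassEX R N).symm.toLinearMap
      = Finsupp.lmapDomain N R (fun m : ℕ => -(m:ℤ)) := by
    apply Finsupp.lhom_ext
    intro k n
    simp [bassEX_symm_single, indTinv, bassET_tmul, T_pow, mul_comm]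
  have := LinearMap.congr_fun h (bassEX R N x)
  simpa using this

lemma bassET_mulTinvSq_indTinv (x : N ⊗[R] R[X]) :
    bassET R N (mulTinvSq R N (indTinv R N x))
      = Finsupp.mapDomain (fun m : ℕ => -(m:ℤ) - 2) (bassEX R N x) := by
  have h : (bassET R N).toLinearMap ∘ₗ (mulTinvSq R N ∘ₗ indTinv R N) ∘ₗ
        (bassEX R N).symm.toLinearMap
      = Finsupp.lmapDomain N R (fun m : ℕ => -(m:ℤ) - 2) := by
    apply Finsupp.lhom_ext
    intro k n
    simp only [LinearMap.coe_comp, Function.comp_apply, LinearEquiv.coe_coe,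
      bassEX_symm_single, indTinv, mulTinvSq, LinearMap.lTensor_tmul,
      AlgHom.toLinearMap_apply, Polynomial.aeval_X_pow, T_pow,
      LinearMap.mulLeft_apply, ← T_add, Finsupp.lmapDomain_apply,
      Finsupp.mapDomain_single]
    rw [bassET_tmul]
    congr 1
    ring
  have := LinearMap.congr_fun h (bassEX R N x)
  simpa using this

end BassInfra

lemma IminusJ_apply (u v : M ⊗[R] R[X]) (u' v' : M' ⊗[R] R[X]) :
    IminusJ R M M' ((u, u'), (v, v'))
      = (indT R M u - indTinv R M v,
         indT R M' u' + mulTinvSq R M' (indTinv R M' v')) := by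
  simp only [IminusJ, Imap, Jmap, LinearMap.sub_apply, LinearMap.coe_comp,
    Function.comp_apply, LinearMap.fst_apply, LinearMap.snd_apply,
    LinearMap.prodMap_apply, LinearMap.neg_apply, Prod.mk_sub_mk, sub_neg_eq_add]

lemma firstMap_apply (m : M) :
    firstMap R M M' m = ((m ⊗ₜ (1:R[X]), 0), (m ⊗ₜ (1:R[X]), 0)) := by
  simp only [firstMap, LinearMap.prod_apply, Function.prod, LinearMap.flip_apply,
    TensorProduct.mk_apply, LinearMap.zero_apply]

lemma bassEX_one_tmul (m : M) :
    bassEX R M (m ⊗ₜ (1:R[X])) = Finsupp.single 0 m := by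
  rw [show (1:R[X]) = (X:R[X])^0 by rw [pow_zero], bassEX_tmul]

lemma toCokerIminusJ_apply (m' : M') :
    toCokerIminusJ R M M' m'
      = Submodule.Quotient.mk (0, m' ⊗ₜ (T (-1) : R[T;T⁻¹])) := by
  simp only [toCokerIminusJ, LinearMap.coe_comp, Function.comp_apply,
    LinearMap.prod_apply, Function.prod, LinearMap.zero_apply, LinearMap.flip_apply,
    TensorProduct.mk_apply, Submodule.mkQ_apply]

/-- (a) The sequence `0 → M → T(R[X]) ⊕ T(R[Y]) → T(R[t,t⁻¹])` is exact, where the first map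
sends `m` to `((m ⊗ 1, 0), (m ⊗ 1, 0))` and the second sends `(u, v)` to `I(u) − J(v)`;
(b) the map `M′ → coker(I − J)` sending `m′` to the class of `(0, m′ ⊗ t⁻¹)` is an isomorphism
of `R`-modules. -/
theorem bass_fundamental_exact_algebraic :
    (Function.Injective (firstMap R M M') ∧
      Function.Exact (firstMap R M M') (IminusJ R M M')) ∧
    Function.Bijective (toCokerIminusJ R M M') := by
  refine ⟨⟨?_, ?_⟩, ?_, ?_⟩
  · -- injectivity of firstMap
    refine (injective_iff_map_eq_zero _).mpr fun m h => ?_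
    rw [firstMap_apply, Prod.ext_iff, Prod.ext_iff] at h
    have h1 : (m ⊗ₜ (1:R[X]) : M ⊗[R] R[X]) = 0 := by
      simpa using h.1.1
    have := congrArg (bassEX R M) h1
    rw [bassEX_one_tmul, map_zero] at this
    simpa using Finsupp.single_eq_zero.mp this
  · -- exactness
    rintro ⟨⟨u, u'⟩, ⟨v, v'⟩⟩
    constructor
    · intro hy
      rw [IminusJ_apply, Prod.mk_eq_zero] at hy
      obtain ⟨h1, h2⟩ := hy
      have h1' : Finsupp.mapDomain (fun m : ℕ => (m:ℤ)) (bassEX R M u)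
          = Finsupp.mapDomain (fun m : ℕ => -(m:ℤ)) (bassEX R M v) := by
        rw [← bassET_indT, ← bassET_indTinv]
        exact congrArg (bassET R M) (sub_eq_zero.mp h1)
      obtain ⟨hu, hv⟩ := BassAux.kerM h1'
      have h2' : Finsupp.mapDomain (fun m : ℕ => (m:ℤ)) (bassEX R M' u')
          + Finsupp.mapDomain (fun m : ℕ => -(m:ℤ) - 2) (bassEX R M' v') = 0 := by
        rw [← bassET_indT, ← bassET_mulTinvSq_indTinv, ← map_add, h2, map_zero]
      obtain ⟨hu', hv'⟩ := BassAux.kerM' h2'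
      have eu : u = (bassEX R M u) 0 ⊗ₜ (1:R[X]) := by
        apply (bassEX R M).injective
        rw [bassEX_one_tmul]; exact hu
      have ev : v = (bassEX R M u) 0 ⊗ₜ (1:R[X]) := by
        apply (bassEX R M).injective
        rw [bassEX_one_tmul]; exact hv
      have eu' : u' = 0 := by
        apply (bassEX R M').injective
        rw [map_zero]; exact hu'
      have ev' : v' = 0 := by
        apply (bassEX R M').injective
        rw [map_zero]; exact hv'
      refine ⟨(bassEX R M u) 0, ?_⟩
      rw [firstMap_apply]
      simp only [Prod.mk.injEq]
      exact ⟨⟨eu.symm, eu'.symm⟩, ev.symm, ev'.symm⟩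
    · rintro ⟨m, hm⟩
      rw [← hm, firstMap_apply, IminusJ_apply]
      simp [indT, indTinv, Prod.ext_iff]
  · -- injectivity of toCokerIminusJ
    refine (injective_iff_map_eq_zero _).mpr fun m' h => ?_
    rw [toCokerIminusJ_apply, Submodule.Quotient.mk_eq_zero] at h
    obtain ⟨⟨⟨u, u'⟩, ⟨v, v'⟩⟩, hx⟩ := h
    rw [IminusJ_apply, Prod.mk.injEq] at hx
    have h2 := congrArg (bassET R M') hx.2
    rw [map_add, bassET_indT, bassET_mulTinvSq_indTinv, bassET_tmul] at h2
    have := DFunLike.congr_fun h2 (-1 : ℤ)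
    rw [Finsupp.add_apply, BassAux.mapDomain_emb_neg _ (by omega),
      BassAux.mapDomain_negsh_ge _ le_rfl] at this
    simpa using this.symm
  · -- surjectivity of toCokerIminusJ
    intro q
    obtain ⟨⟨x, y⟩, rfl⟩ := Submodule.Quotient.mk_surjective _ q
    set m' : M' := (bassET R M' y) (-1) with hm'
    obtain ⟨f, g, hfg⟩ := BassAux.surjM (bassET R M x)
    obtain ⟨f', g', hfg'⟩ := BassAux.surjM'
      (bassET R M' y - Finsupp.single (-1) m')
      (by rw [Finsupp.sub_apply, Finsupp.single_eq_same, hm']; exact sub_self _)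
    refine ⟨m', ?_⟩
    rw [toCokerIminusJ_apply, Submodule.Quotient.eq]
    refine ⟨-(((bassEX R M).symm f, (bassEX R M').symm f'),
      ((bassEX R M).symm g, (bassEX R M').symm g')), ?_⟩
    rw [map_neg, IminusJ_apply]
    have hx : indT R M ((bassEX R M).symm f) - indTinv R M ((bassEX R M).symm g) = x := by
      apply (bassET R M).injective
      rw [map_sub, bassET_indT, bassET_indTinv, LinearEquiv.apply_symm_apply,
        LinearEquiv.apply_symm_apply]
      exact hfg
    have hy : indT R M' ((bassEX R M').symm f')
        + mulTinvSq R M' (indTinv R M' ((bassEX R M').symm g'))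
        = y - m' ⊗ₜ (T (-1) : R[T;T⁻¹]) := by
      apply (bassET R M').injective
      rw [map_add, bassET_indT, bassET_mulTinvSq_indTinv, LinearEquiv.apply_symm_apply,
        LinearEquiv.apply_symm_apply, map_sub, bassET_tmul]
      exact hfg'
    rw [hx, hy, Prod.neg_mk, Prod.mk_sub_mk, Prod.mk.injEq]
    exact ⟨by rw [zero_sub], by rw [neg_sub]⟩


end
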